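/- With a_l^{(0)} = δ_{l,0} and the formal ε-expansion of the fixed point equation 2^{l/l*} Σ_{k=0}^N (β^{−2l})^{(N−k)} a_l^{(k)} = Σ_{k=0}^N Σ_{m,n} C_l^{mn} a_m^{(N−k)} a_n^{(k)}, for every l ≠ l* and N ≥ 1 the coefficient a_l^{(N)} is uniquely determined by a_l^{(N)} = (2^{l/l*} − 2)^{−1} Σ_{k=1}^{N−1} ( −2^{l/l*} (β^{−2l})^{(N−k)} a_l^{(k)} + Σ_{m,n} C_l^{mn} a_m^{(N−k)} a_n^{(k)} ). -/

import Mathlib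

open Finset

/-- The structure coefficients `C_l^{mn}` of the Wick product expansion. -/
noncomputable def Ccoef (l m n : ℕ) : ℝ :=
  if m ≤ n + l ∧ n ≤ m + l ∧ l ≤ m + n then
    (Nat.factorial (2 * m) : ℝ) * (Nat.factorial (2 * n)) /
      ((Nat.factorial (m + n - l)) * (Nat.factorial (l + n - m)) *
        (Nat.factorial (l + m - n)))
  else 0

lemma Ccoef_right_zero (l m : ℕ) : Ccoef l m 0 = if m = l then 1 else 0 := by
  unfold Ccoef
  by_cases h : m = l
  · subst h
    simp only [if_pos (by omega : m ≤ 0 + m ∧ 0 ≤ m + m ∧ m ≤ m + 0), if_pos rfl]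
    rw [show m + 0 - m = 0 by omega, show m + m - 0 = 2 * m by omega]
    simp [div_self (by positivity : ((Nat.factorial (2*m) : ℝ)) ≠ 0)]
  · rw [if_neg (by omega), if_neg h]

lemma Ccoef_left_zero (l n : ℕ) : Ccoef l 0 n = if n = l then 1 else 0 := by
  unfold Ccoef
  by_cases h : n = l
  · subst h
    simp only [if_pos (by omega : 0 ≤ n + n ∧ n ≤ 0 + n ∧ n ≤ 0 + n), if_pos rfl]
    rw [show 0 + n - n = 0 by omega, show n + n - 0 = 2 * n by omega]
    simp [div_self (by positivity : ((Nat.factorial (2*n) : ℝ)) ≠ 0)]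
  · rw [if_neg (by omega), if_neg h]

/-- Order `N` of the ε-expansion of the fixed point equation: for `l ≠ l*`, `N ≥ 1`,
the coefficient `a_l^{(N)}` is uniquely determined by the lower-order data via
`a_l^{(N)} = (2^{l/l*}-2)⁻¹ Σ_{k=1}^{N-1}(-2^{l/l*}(β^{-2l})^{(N-k)} a_l^{(k)}
 + Σ_{m,n} C_l^{mn} a_m^{(N-k)} a_n^{(k)})`. -/
theorem stmt11 (lstar : ℕ) (hl : 2 ≤ lstar)
    (b : ℕ → ℕ → ℝ) (hb0 : ∀ l, b l 0 = 1) (hbzero : ∀ m, 0 < m → b 0 m = 0)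
    (a : ℕ → ℕ → ℝ) (hsupp : ∀ k, (Function.support (fun l => a l k)).Finite)
    (ha0 : ∀ l, a l 0 = if l = 0 then 1 else 0)
    (heq : ∀ l N : ℕ, (2 : ℝ) ^ ((l : ℝ) / lstar) * ∑ k ∈ range (N + 1), b l (N - k) * a l k
      = ∑ k ∈ range (N + 1), ∑ᶠ m, ∑ᶠ n, Ccoef l m n * a m (N - k) * a n k) :
    ∀ l, l ≠ lstar → ∀ N : ℕ, 1 ≤ N →
      a l N = ((2 : ℝ) ^ ((l : ℝ) / lstar) - 2)⁻¹ *
        ∑ k ∈ Finset.Ico 1 N,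
          (-(2 : ℝ) ^ ((l : ℝ) / lstar) * b l (N - k) * a l k +
            ∑ᶠ m, ∑ᶠ n, Ccoef l m n * a m (N - k) * a n k) := by
  intro l hlne N hN
  have hx : (2 : ℝ) ^ ((l : ℝ) / lstar) - 2 ≠ 0 := by
    rw [sub_ne_zero]
    intro h
    have h2 : (2 : ℝ) ^ ((l : ℝ) / lstar) = (2 : ℝ) ^ (1 : ℝ) := by
      rw [Real.rpow_one]; exact h
    have hle : (l : ℝ) / lstar = 1 := by
      have h1 := (Real.rpow_le_rpow_left_iff (x := 2) (by norm_num)).mp h2.le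
      have h2' := (Real.rpow_le_rpow_left_iff (x := 2) (by norm_num)).mp h2.ge
      linarith
    have hls : (lstar : ℝ) ≠ 0 := by positivity
    rw [div_eq_one_iff_eq hls] at hle
    exact hlne (by exact_mod_cast hle)
  set x : ℝ := (2 : ℝ) ^ ((l : ℝ) / lstar) with hxdef
  have key := heq l N
  -- evaluate the k = 0 term of the RHS
  have hrhs0 : (∑ᶠ m, ∑ᶠ n, Ccoef l m n * a m (N - 0) * a n 0) = a l N := by
    have hin : ∀ m, (∑ᶠ n, Ccoef l m n * a m (N - 0) * a n 0)
        = Ccoef l m 0 * a m N := by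
      intro m
      rw [finsum_eq_single _ 0 (fun n hn => by simp [ha0, hn])]
      simp [ha0]
    simp only [hin]
    rw [finsum_eq_single _ l (fun m hm => by simp [Ccoef_right_zero, hm])]
    simp [Ccoef_right_zero]
  -- evaluate the k = N term of the RHS
  have hrhsN : (∑ᶠ m, ∑ᶠ n, Ccoef l m n * a m (N - N) * a n N) = a l N := by
    rw [finsum_eq_single _ 0 (fun m hm => by simp [Nat.sub_self, ha0, hm])]
    rw [finsum_eq_single _ l (fun n hn => by simp [Ccoef_left_zero, hn])]
    simp [Ccoef_left_zero, ha0]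
  -- split the sums
  have hsplit : ∀ f : ℕ → ℝ, ∑ k ∈ range (N + 1), f k
      = f 0 + (∑ k ∈ Ico 1 N, f k) + f N := by
    intro f
    rw [Finset.sum_range_succ, Finset.sum_range_eq_add_Ico _ (by omega : 0 < N)]
  rw [hsplit, hsplit] at key
  rw [hrhs0, hrhsN] at key
  have hL0 : b l (N - 0) * a l 0 = 0 := by
    rw [Nat.sub_zero, ha0]
    by_cases h : l = 0
    · subst h; simp [hbzero N (by omega)]
    · simp [h]
  have hLN : b l (N - N) * a l N = a l N := by
    rw [Nat.sub_self, hb0]; ring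
  rw [hL0, hLN] at key
  rw [← hxdef] at key
  rw [eq_inv_mul_iff_mul_eq₀ hx]
  rw [Finset.sum_add_distrib]
  have hms : ∑ k ∈ Ico 1 N, -x * b l (N - k) * a l k
      = -x * ∑ k ∈ Ico 1 N, b l (N - k) * a l k := by
    rw [Finset.mul_sum]; apply Finset.sum_congr rfl; intro k _; ring
  rw [hms]
  linear_combination key
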